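/- Among all measurable sets D ⊆ R^n with ∫_D f = γ, where f is a continuous multivariate Gaussian density, the superlevel set {w : f(w) > C} (for the C achieving probability γ) has minimal Lebesgue measure: if E is any other measurable set with ∫_E f = γ, then vol(D) ≤ vol(E). -/

import Mathlib

open MeasureTheory Real

/-- Density of a multivariate Gaussian `N(μ, Σ)` on `ℝⁿ` (as `Fin n → ℝ`). -/
noncomputable def gaussDensity {n : ℕ} (μv : Fin n → ℝ)
    (S : Matrix (Fin n) (Fin n) ℝ) (x : Fin n → ℝ) : ℝ :=
  (Real.sqrt ((2 * Real.pi) ^ n * S.det))⁻¹ *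
    Real.exp (-(1 / 2) * dotProduct (x - μv) (S⁻¹.mulVec (x - μv)))

/-- Among all measurable sets carrying Gaussian probability mass `γ`, the
superlevel set `{w | f w > C}` has minimal Lebesgue measure. -/
theorem gaussian_superlevel_min_volume (n : ℕ) (μv : Fin n → ℝ)
    (S : Matrix (Fin n) (Fin n) ℝ) (hS : S.PosDef) (γ C : ℝ)
    (hγ : γ ∈ Set.Ioo (0 : ℝ) 1) (hC : 0 < C)
    (hDγ : ∫ w in {w : Fin n → ℝ | C < gaussDensity μv S w}, gaussDensity μv S w = γ)
    (E : Set (Fin n → ℝ)) (hE : MeasurableSet E)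
    (hEγ : ∫ w in E, gaussDensity μv S w = γ) :
    volume {w : Fin n → ℝ | C < gaussDensity μv S w} ≤ volume E := by
  set f := gaussDensity μv S with hf
  have hf_cont : Continuous f := by
    have hq : Continuous fun x : Fin n → ℝ =>
        dotProduct (x - μv) (S⁻¹.mulVec (x - μv)) :=
      (continuous_id.sub continuous_const).dotProduct
        (continuous_const.matrix_mulVec (continuous_id.sub continuous_const))
    rw [hf]; unfold gaussDensity
    exact continuous_const.mul (Real.continuous_exp.comp (continuous_const.mul hq))
  have hf_nonneg : ∀ x, 0 ≤ f x := by
    intro x; rw [hf]; unfold gaussDensity; positivity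
  set D := {w : Fin n → ℝ | C < f w} with hD
  have hDopen : IsOpen D := isOpen_lt continuous_const hf_cont
  have hDm : MeasurableSet D := hDopen.measurableSet
  have hintD : IntegrableOn f D := by
    by_contra h
    rw [integral_undef h] at hDγ
    exact absurd hDγ.symm (ne_of_gt hγ.1)
  have hintE : IntegrableOn f E := by
    by_contra h
    rw [integral_undef h] at hEγ
    exact absurd hEγ.symm (ne_of_gt hγ.1)
  set g : (Fin n → ℝ) → ENNReal := fun w => ENNReal.ofReal (f w) with hg
  have hgm : Measurable g := (ENNReal.measurable_ofReal.comp hf_cont.measurable)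
  have hgD : ∫⁻ w in D, g w = ENNReal.ofReal γ := by
    rw [← hDγ, ofReal_integral_eq_lintegral_ofReal hintD (ae_of_all _ hf_nonneg)]
  have hgE : ∫⁻ w in E, g w = ENNReal.ofReal γ := by
    rw [← hEγ, ofReal_integral_eq_lintegral_ofReal hintE (ae_of_all _ hf_nonneg)]
  have hsplitD : (∫⁻ w in D ∩ E, g w) + ∫⁻ w in D \ E, g w = ENNReal.ofReal γ := by
    rw [← hgD]; exact lintegral_inter_add_diff g D hE
  have hsplitE : (∫⁻ w in E ∩ D, g w) + ∫⁻ w in E \ D, g w = ENNReal.ofReal γ := by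
    rw [← hgE]; exact lintegral_inter_add_diff g E hDm
  have hinter : (∫⁻ w in D ∩ E, g w) = ∫⁻ w in E ∩ D, g w := by
    rw [Set.inter_comm]
  have hfin : (∫⁻ w in D ∩ E, g w) ≠ ⊤ := by
    intro h
    rw [h] at hsplitD
    simp at hsplitD
  have hkey : (∫⁻ w in D \ E, g w) = ∫⁻ w in E \ D, g w := by
    have := hsplitD.trans hsplitE.symm
    rw [hinter] at this
    exact (ENNReal.add_right_inj (hinter ▸ hfin)).mp this
  have h1 : ENNReal.ofReal C * volume (D \ E) ≤ ∫⁻ w in D \ E, g w := by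
    calc ENNReal.ofReal C * volume (D \ E) = ∫⁻ _ in D \ E, ENNReal.ofReal C := by
          rw [setLIntegral_const]
      _ ≤ ∫⁻ w in D \ E, g w := by
          apply setLIntegral_mono hgm
          intro x hx
          exact ENNReal.ofReal_le_ofReal (le_of_lt hx.1)
  have h2 : (∫⁻ w in E \ D, g w) ≤ ENNReal.ofReal C * volume (E \ D) := by
    calc (∫⁻ w in E \ D, g w) ≤ ∫⁻ _ in E \ D, ENNReal.ofReal C := by
          apply setLIntegral_mono measurable_const
          intro x hx
          exact ENNReal.ofReal_le_ofReal (not_lt.mp hx.2)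
      _ = ENNReal.ofReal C * volume (E \ D) := setLIntegral_const _ _
  have hvol : volume (D \ E) ≤ volume (E \ D) := by
    have h3 : ENNReal.ofReal C * volume (D \ E) ≤ ENNReal.ofReal C * volume (E \ D) :=
      h1.trans (hkey ▸ h2)
    exact (ENNReal.mul_le_mul_iff_right (by simpa using hC) ENNReal.ofReal_ne_top).mp h3
  have hDsum : volume (D ∩ E) + volume (D \ E) = volume D := measure_inter_add_diff D hE
  have hEsum : volume (E ∩ D) + volume (E \ D) = volume E := measure_inter_add_diff E hDm
  rw [← hDsum, ← hEsum, Set.inter_comm E D]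
  exact add_le_add le_rfl hvol
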